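/- Suppose the DM-TWC satisfies condition (b1). Then there exists a distribution P*_{X₂} on 𝒳₂ such that for every x₁ ∈ 𝒳₁, P*_{X₂} maximizes P ↦ 𝓘(P, P_{Y₁|X₁=x₁,X₂}) over all distributions P on 𝒳₂ (i.e., the one-way channels P_{Y₁|X₁=x₁,X₂}, x₁ ∈ 𝒳₁, admit a common optimal input distribution). -/

import Mathlib

open scoped BigOperators

/-- `P` is a probability distribution on the finite alphabet `A`. -/
def IsDist {A : Type*} [Fintype A] (P : A → ℝ) : Prop :=
  (∀ a, 0 ≤ P a) ∧ ∑ a, P a = 1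

/-- Input–output mutual information 𝓘(P, W) (in bits) of a channel `W`
from the finite alphabet `A` to the finite alphabet `B` under input distribution `P`. -/
noncomputable def mutInfo {A B : Type*} [Fintype A] [Fintype B]
    (P : A → ℝ) (W : A → B → ℝ) : ℝ :=
  ∑ a, ∑ b, P a * W a b * Real.logb 2 (W a b / ∑ a', P a' * W a' b)

/-- Shannon entropy (base 2) of a distribution on a finite alphabet. -/
noncomputable def ent {B : Type*} [Fintype B] (Q : B → ℝ) : ℝ :=
  -∑ b, Q b * Real.logb 2 (Q b)

section TWC

variable {X1 X2 Y1 Y2 : Type*} [Fintype X1] [Fintype X2] [Fintype Y1] [Fintype Y2]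

/-- A joint input distribution on `X1 × X2`. -/
def IsJointDist (P : X1 → X2 → ℝ) : Prop :=
  (∀ x1 x2, 0 ≤ P x1 x2) ∧ ∑ x1, ∑ x2, P x1 x2 = 1

/-- Marginal of a joint input distribution on `X1`. -/
noncomputable def margin1 (P : X1 → X2 → ℝ) (x1 : X1) : ℝ := ∑ x2, P x1 x2

/-- Marginal of a joint input distribution on `X2`. -/
noncomputable def margin2 (P : X1 → X2 → ℝ) (x2 : X2) : ℝ := ∑ x1, P x1 x2

/-- Conditional distribution P_{X₁|X₂=x₂}. -/
noncomputable def cond1given2 (P : X1 → X2 → ℝ) (x2 : X2) (x1 : X1) : ℝ :=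
  P x1 x2 / margin2 P x2

/-- Conditional distribution P_{X₂|X₁=x₁}. -/
noncomputable def cond2given1 (P : X1 → X2 → ℝ) (x1 : X1) (x2 : X2) : ℝ :=
  P x1 x2 / margin1 P x1

/-- The conditional mutual information I(X₁;Y₂|X₂) under the joint input distribution `P`,
where `W2` is the marginal channel P_{Y₂|X₁,X₂}. -/
noncomputable def condMI12 (P : X1 → X2 → ℝ) (W2 : X1 → X2 → Y2 → ℝ) : ℝ :=
  ∑ x2, margin2 P x2 * mutInfo (cond1given2 P x2) (fun x1 => W2 x1 x2)

/-- The conditional mutual information I(X₂;Y₁|X₁) under the joint input distribution `P`,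
where `W1` is the marginal channel P_{Y₁|X₁,X₂}. -/
noncomputable def condMI21 (P : X1 → X2 → ℝ) (W1 : X1 → X2 → Y1 → ℝ) : ℝ :=
  ∑ x1, margin1 P x1 * mutInfo (cond2given1 P x1) (fun x2 => W1 x1 x2)

/-- The rate region 𝓡(P_{X₁,X₂}). -/
noncomputable def rateRegion (W1 : X1 → X2 → Y1 → ℝ) (W2 : X1 → X2 → Y2 → ℝ)
    (P : X1 → X2 → ℝ) : Set (ℝ × ℝ) :=
  {r | 0 ≤ r.1 ∧ r.1 ≤ condMI12 P W2 ∧ 0 ≤ r.2 ∧ r.2 ≤ condMI21 P W1}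

/-- Shannon's inner bound C_I: the closure of the convex hull of the union of the
rate regions of all product input distributions. -/
noncomputable def innerBound (W1 : X1 → X2 → Y1 → ℝ) (W2 : X1 → X2 → Y2 → ℝ) :
    Set (ℝ × ℝ) :=
  closure (convexHull ℝ
    (⋃ P ∈ {P : X1 → X2 → ℝ |
        ∃ P1 P2, IsDist P1 ∧ IsDist P2 ∧ P = fun x1 x2 => P1 x1 * P2 x2},
      rateRegion W1 W2 P))

/-- Shannon's outer bound C_O: the union of the rate regions of all joint input
distributions. -/
noncomputable def outerBound (W1 : X1 → X2 → Y1 → ℝ) (W2 : X1 → X2 → Y2 → ℝ) :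
    Set (ℝ × ℝ) :=
  ⋃ P ∈ {P : X1 → X2 → ℝ | IsJointDist P}, rateRegion W1 W2 P

/-- The largest input–output mutual information of the one-way channel
P_{Y₂|X₁,X₂=x₂}. -/
noncomputable def capAt (W2 : X1 → X2 → Y2 → ℝ) (x2 : X2) : ℝ :=
  sSup {I | ∃ P : X1 → ℝ, IsDist P ∧ I = mutInfo P (fun x1 => W2 x1 x2)}

/-- α*: how close the channels {P_{Y₂|X₁,X₂=x₂}} are to having a common optimal
input distribution. -/
noncomputable def alphaStar (W2 : X1 → X2 → Y2 → ℝ) : ℝ :=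
  sInf {a | ∃ Pt : X1 → ℝ, IsDist Pt ∧
    a = ⨆ x2, |mutInfo Pt (fun x1 => W2 x1 x2) - capAt W2 x2|}

/-- β*: the degree of invariance in the input–output mutual information of the
channels {P_{Y₁|X₁=x₁,X₂}}. -/
noncomputable def betaStar (W1 : X1 → X2 → Y1 → ℝ) : ℝ :=
  sSup {b | ∃ (P : X2 → ℝ) (x1 x1' : X1), IsDist P ∧ x1 ≠ x1' ∧
    b = |mutInfo P (fun x2 => W1 x1 x2) - mutInfo P (fun x2 => W1 x1' x2)|}

/-- I*₁ = max_{x₂} max_{P} 𝓘(P, P_{Y₂|X₁,X₂=x₂}). -/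
noncomputable def IStar1 (W2 : X1 → X2 → Y2 → ℝ) : ℝ :=
  sSup {I | ∃ (x2 : X2) (P : X1 → ℝ), IsDist P ∧ I = mutInfo P (fun x1 => W2 x1 x2)}

/-- I*₂ = max_{x₁} max_{P} 𝓘(P, P_{Y₁|X₁=x₁,X₂}). -/
noncomputable def IStar2 (W1 : X1 → X2 → Y1 → ℝ) : ℝ :=
  sSup {I | ∃ (x1 : X1) (P : X2 → ℝ), IsDist P ∧ I = mutInfo P (fun x2 => W1 x1 x2)}

/-- Condition (a): `Pstar` is a common optimal input distribution for the channels
{P_{Y₂|X₁,X₂=x₂} : x₂ ∈ 𝒳₂}. -/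
def CondA (W2 : X1 → X2 → Y2 → ℝ) (Pstar : X1 → ℝ) : Prop :=
  IsDist Pstar ∧ ∀ x2 : X2, ∀ P : X1 → ℝ, IsDist P →
    mutInfo P (fun x1 => W2 x1 x2) ≤ mutInfo Pstar (fun x1 => W2 x1 x2)

/-- Condition (b1): for every input distribution on 𝒳₂, the input–output mutual
information of P_{Y₁|X₁=x₁,X₂} does not depend on x₁. -/
def CondB1 (W1 : X1 → X2 → Y1 → ℝ) : Prop :=
  ∀ P : X2 → ℝ, IsDist P → ∀ x1 x1' : X1,
    mutInfo P (fun x2 => W1 x1 x2) = mutInfo P (fun x2 => W1 x1' x2)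

/-- H(Y₁|X₁,X₂) under the joint input distribution `P`. -/
noncomputable def condEntFull (P : X1 → X2 → ℝ) (W1 : X1 → X2 → Y1 → ℝ) : ℝ :=
  ∑ x1, ∑ x2, P x1 x2 * ent (W1 x1 x2)

/-- H(Y₁|X₁) under the joint input distribution `P`. -/
noncomputable def condEntY1X1 (P : X1 → X2 → ℝ) (W1 : X1 → X2 → Y1 → ℝ) : ℝ :=
  ∑ x1, margin1 P x1 * ent (fun y1 => ∑ x2, cond2given1 P x1 x2 * W1 x1 x2 y1)

/-- Condition (b2), part (i): H(Y₁|X₁,X₂) depends on the joint input distribution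
only through its marginal on 𝒳₂. -/
def CondB2i (W1 : X1 → X2 → Y1 → ℝ) : Prop :=
  ∀ P Q : X1 → X2 → ℝ, IsJointDist P → IsJointDist Q →
    margin2 P = margin2 Q → condEntFull P W1 = condEntFull Q W1

/-- Condition (b2), part (ii), relative to the common optimal input `Pstar`:
H⁽¹⁾(Y₁|X₁) ≤ H⁽²⁾(Y₁|X₁) where P⁽²⁾ = P*_{X₁}·P⁽¹⁾_{X₂}. -/
def CondB2ii (W1 : X1 → X2 → Y1 → ℝ) (Pstar : X1 → ℝ) : Prop :=
  ∀ P : X1 → X2 → ℝ, IsJointDist P →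
    condEntY1X1 P W1 ≤ condEntY1X1 (fun x1 x2 => Pstar x1 * margin2 P x2) W1


/-- Decomposition of mutual information into a linear part and an output-entropy part,
valid for nonnegative inputs and channels. -/
lemma mutInfo_eq_aux {A B : Type*} [Fintype A] [Fintype B]
    (P : A → ℝ) (hP : ∀ a, 0 ≤ P a) (W : A → B → ℝ) (hW : ∀ a b, 0 ≤ W a b) :
    mutInfo P W = (∑ a, ∑ b, P a * W a b * Real.logb 2 (W a b))
      - ∑ b, (∑ a, P a * W a b) * Real.logb 2 (∑ a, P a * W a b) := by
  have key : ∀ a b, P a * W a b * Real.logb 2 (W a b / ∑ a', P a' * W a' b)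
      = P a * W a b * Real.logb 2 (W a b)
        - P a * W a b * Real.logb 2 (∑ a', P a' * W a' b) := by
    intro a b
    by_cases h : P a * W a b = 0
    · rw [h]; ring
    · have hPa : 0 < P a := lt_of_le_of_ne (hP a) (by
        intro hh; exact h (by rw [← hh]; ring))
      have hWab : 0 < W a b := lt_of_le_of_ne (hW a b) (by
        intro hh; exact h (by rw [← hh]; ring))
      have hS : 0 < ∑ a', P a' * W a' b := by
        refine lt_of_lt_of_le (mul_pos hPa hWab) ?_
        exact Finset.single_le_sum (f := fun a' => P a' * W a' b)
          (fun i _ => mul_nonneg (hP i) (hW i b)) (Finset.mem_univ a)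
      rw [Real.logb_div hWab.ne' hS.ne', mul_sub]
  unfold mutInfo
  calc (∑ a, ∑ b, P a * W a b * Real.logb 2 (W a b / ∑ a', P a' * W a' b))
      = ∑ a, ∑ b, (P a * W a b * Real.logb 2 (W a b)
          - P a * W a b * Real.logb 2 (∑ a', P a' * W a' b)) := by
        refine Finset.sum_congr rfl fun a _ => Finset.sum_congr rfl fun b _ => key a b
    _ = (∑ a, ∑ b, P a * W a b * Real.logb 2 (W a b))
        - ∑ a, ∑ b, P a * W a b * Real.logb 2 (∑ a', P a' * W a' b) := by
        rw [← Finset.sum_sub_distrib]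
        refine Finset.sum_congr rfl fun a _ => ?_
        rw [← Finset.sum_sub_distrib]
    _ = (∑ a, ∑ b, P a * W a b * Real.logb 2 (W a b))
        - ∑ b, (∑ a, P a * W a b) * Real.logb 2 (∑ a', P a' * W a' b) := by
        rw [Finset.sum_comm (f := fun a b => P a * W a b * Real.logb 2 (∑ a', P a' * W a' b))]
        congr 1
        refine Finset.sum_congr rfl fun b _ => ?_
        rw [Finset.sum_mul]

/-- The map `P ↦ 𝓘(P, W)` (suitably rewritten) is continuous. -/
lemma continuous_mutInfo_aux {A B : Type*} [Fintype A] [Fintype B] (W : A → B → ℝ) :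
    Continuous (fun P : A → ℝ =>
      (∑ a, ∑ b, P a * W a b * Real.logb 2 (W a b))
        - ∑ b, (∑ a, P a * W a b) * Real.logb 2 (∑ a, P a * W a b)) := by
  have hφ : Continuous (fun x : ℝ => x * Real.logb 2 x) := by
    have : (fun x : ℝ => x * Real.logb 2 x)
        = fun x : ℝ => (x * Real.log x) / Real.log 2 := by
      funext x; rw [Real.logb, mul_div_assoc]
    rw [this]
    exact Real.continuous_mul_log.div_const _
  refine Continuous.sub ?_ ?_
  · refine continuous_finset_sum _ fun a _ => continuous_finset_sum _ fun b _ => ?_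
    exact ((continuous_apply a).mul continuous_const).mul continuous_const
  · refine continuous_finset_sum _ fun b _ => ?_
    have hL : Continuous (fun P : A → ℝ => ∑ a, P a * W a b) :=
      continuous_finset_sum _ fun a _ => (continuous_apply a).mul continuous_const
    exact hφ.comp hL

/-- For a fixed channel with nonnegative entries, a maximizer of the
input–output mutual information over all input distributions exists. -/
lemma exists_max_mutInfo {A B : Type*} [Fintype A] [Fintype B] [Nonempty A]
    (W : A → B → ℝ) (hW : ∀ a b, 0 ≤ W a b) :
    ∃ Pstar : A → ℝ, IsDist Pstar ∧
      ∀ P : A → ℝ, IsDist P → mutInfo P W ≤ mutInfo Pstar W := by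
  have hset : {P : A → ℝ | IsDist P} = stdSimplex ℝ A := by
    ext P; rfl
  have hcomp : IsCompact {P : A → ℝ | IsDist P} := by
    rw [hset]; exact isCompact_stdSimplex ℝ A
  have hne : ({P : A → ℝ | IsDist P}).Nonempty := by
    classical
    obtain ⟨a0⟩ := ‹Nonempty A›
    refine ⟨fun a => if a = a0 then 1 else 0, ⟨fun a => ?_, ?_⟩⟩
    · dsimp only; split <;> norm_num
    · simp
  obtain ⟨Pstar, hmem, hmax⟩ :=
    hcomp.exists_isMaxOn hne (continuous_mutInfo_aux W).continuousOn
  refine ⟨Pstar, hmem, fun P hP => ?_⟩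
  have h1 := mutInfo_eq_aux P hP.1 W hW
  have h2 := mutInfo_eq_aux Pstar hmem.1 W hW
  rw [h1, h2]
  exact hmax hP

/-- if the DM-TWC satisfies condition (b1), then the one-way channels
P_{Y₁|X₁=x₁,X₂}, x₁ ∈ 𝒳₁, admit a common optimal input distribution. -/
theorem stmt0 [Nonempty X1] [Nonempty X2]
    (W1 : X1 → X2 → Y1 → ℝ) (hW1 : ∀ x1 x2, IsDist (W1 x1 x2))
    (hb1 : CondB1 W1) :
    ∃ Pstar2 : X2 → ℝ, IsDist Pstar2 ∧
      ∀ x1 : X1, ∀ P : X2 → ℝ, IsDist P →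
        mutInfo P (fun x2 => W1 x1 x2) ≤ mutInfo Pstar2 (fun x2 => W1 x1 x2) := by
  obtain ⟨x10⟩ := ‹Nonempty X1›
  obtain ⟨Pstar, hPd, hmax⟩ :=
    exists_max_mutInfo (fun x2 => W1 x10 x2) (fun x2 y1 => (hW1 x10 x2).1 y1)
  refine ⟨Pstar, hPd, fun x1 P hP => ?_⟩
  calc mutInfo P (fun x2 => W1 x1 x2)
      = mutInfo P (fun x2 => W1 x10 x2) := hb1 P hP x1 x10
    _ ≤ mutInfo Pstar (fun x2 => W1 x10 x2) := hmax P hP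
    _ = mutInfo Pstar (fun x2 => W1 x1 x2) := hb1 Pstar hPd x10 x1

end TWC
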